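/- Let p be a prime, Q = p^d a power of p, and e ≥ 1 an integer. Let φ : U^1 → ℤ/p^eℤ be a continuous group homomorphism from the first higher unit group of 𝔽_Q((t)) to the discrete cyclic group ℤ/p^eℤ. For each integer i ≥ 0, define jump_i(φ) := the least integer k ≥ 0 such that p^i·φ(u) = 0 for all u ∈ U^{k+1} (i.e. φ(U^{k+1}) is contained in the p^i-torsion subgroup). Then for every i ≥ 0, jump_i(φ) ≥ p·jump_{i+1}(φ). -/

import Mathlib

open PowerSeries

noncomputable section

/-- The `k`-th higher unit group `U^k = 1 + t^k 𝔽_Q⟦t⟧` of the Laurent series field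
`𝔽_Q((t))`, as a subgroup of the unit group of the valuation ring `𝔽_Q⟦t⟧`. -/
def HU (K : Type) [CommRing K] (k : ℕ) : Subgroup (PowerSeries K)ˣ where
  carrier := {u | (PowerSeries.X : PowerSeries K) ^ k ∣ ((u : PowerSeries K) - 1)}
  one_mem' := by simp
  mul_mem' := by
    intro a b ha hb
    have h : ((a * b : (PowerSeries K)ˣ) : PowerSeries K) - 1
        = ((a : PowerSeries K) - 1) * (b : PowerSeries K) + ((b : PowerSeries K) - 1) := by
      push_cast; ring
    rw [Set.mem_setOf_eq, h]
    exact dvd_add (ha.mul_right _) hb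
  inv_mem' := by
    intro a ha
    have h : ((a⁻¹ : (PowerSeries K)ˣ) : PowerSeries K) - 1
        = -(((a : PowerSeries K) - 1) * ((a⁻¹ : (PowerSeries K)ˣ) : PowerSeries K)) := by
      rw [sub_mul, one_mul, Units.mul_inv]; ring
    rw [Set.mem_setOf_eq, h]
    exact (dvd_neg).mpr (ha.mul_right _)

/-- The t-adic topology on the power series ring over a (discrete) coefficient ring:
the coefficientwise (product) topology with discrete coefficients. -/
def psTop (K : Type) [CommRing K] : TopologicalSpace (PowerSeries K) :=
  letI : TopologicalSpace K := ⊥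
  TopologicalSpace.induced (fun f (n : ℕ) => PowerSeries.coeff n f) inferInstance

/-- The t-adic topology on the unit group of `𝔽_Q⟦t⟧`. -/
def unitsTop (K : Type) [CommRing K] : TopologicalSpace (PowerSeries K)ˣ :=
  TopologicalSpace.induced Units.val (psTop K)

/-- The t-adic topology on the higher unit group `U^k`. -/
def huTop (K : Type) [CommRing K] (k : ℕ) : TopologicalSpace ↥(HU K k) :=
  TopologicalSpace.induced Subtype.val (unitsTop K)

/-- Continuity of a homomorphism from `U^1` (with the t-adic topology) to a discrete group. -/
def IsContHom {K : Type} [CommRing K] {G : Type} [Group G] (φ : ↥(HU K 1) →* G) : Prop :=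
  letI := huTop K 1
  letI : TopologicalSpace G := ⊥
  Continuous ⇑φ

/-- The last jump of `φ : U^1 → G`: the least `k ≥ 0` with `φ(U^{k+1}) = 1`. -/
def lastjump {K : Type} [CommRing K] {G : Type} [Group G] (φ : ↥(HU K 1) →* G) : ℕ :=
  sInf {k : ℕ | ∀ u : ↥(HU K 1), (u : (PowerSeries K)ˣ) ∈ HU K (k + 1) → φ u = 1}

/-- The finite abelian `p`-group `G = ∏_{e ≥ 1} C_{p^e}^{m_e}` (with `m_e = 0` for `e > t`),
written multiplicatively. -/
abbrev Gp (p t : ℕ) (m : ℕ → ℕ) : Type :=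
  Multiplicative ((e : Fin t) → Fin (m (e.1 + 1)) → ZMod (p ^ (e.1 + 1)))

/-- The rationals `c_0 = 0` and `c_i = Σ_{e≥1} m_e − Σ_{e=1}^{i−1} m_e p^{−e}` for `i ≥ 1`. -/
def cseq (p t : ℕ) (m : ℕ → ℕ) : ℕ → ℚ
  | 0 => 0
  | (i + 1) => (∑ e ∈ Finset.Icc 1 t, (m e : ℚ)) - ∑ e ∈ Finset.Icc 1 i, (m e : ℚ) / (p : ℚ) ^ e

/-- The `i`-th jump of `φ : U^1 → ℤ/p^eℤ`: the least `k ≥ 0` such that `p^i·φ(u) = 0` for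
all `u ∈ U^{k+1}`, i.e. `φ(U^{k+1})` is contained in the `p^i`-torsion subgroup. -/
def jumpAt {K : Type} [CommRing K] {p e : ℕ}
    (φ : ↥(HU K 1) →* Multiplicative (ZMod (p ^ e))) (i : ℕ) : ℕ :=
  sInf {k : ℕ | ∀ u : ↥(HU K 1),
    (u : (PowerSeries K)ˣ) ∈ HU K (k + 1) → (φ u) ^ (p ^ i) = 1}


section Aux
open PowerSeries

lemma mem_HU_iff {K : Type} [CommRing K] {k : ℕ} (u : (PowerSeries K)ˣ) :
    u ∈ HU K k ↔ (PowerSeries.X : PowerSeries K) ^ k ∣ ((u : PowerSeries K) - 1) := Iff.rfl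

lemma psTop_eq (K : Type) [CommRing K] :
    psTop K = @TopologicalSpace.induced _ _ (fun f (n : ℕ) => PowerSeries.coeff n f)
      (@Pi.topologicalSpace ℕ (fun _ => K) (fun _ => ⊥)) := rfl

lemma psTop_nhds {K : Type} [CommRing K] (f₀ : PowerSeries K) (s : Set (PowerSeries K))
    (hs : s ∈ @nhds _ (psTop K) f₀) :
    ∃ N : ℕ, ∀ g : PowerSeries K, (∀ n ≤ N, coeff n g = coeff n f₀) → g ∈ s := by
  letI : TopologicalSpace K := ⊥
  haveI : DiscreteTopology K := ⟨rfl⟩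
  rw [psTop_eq, nhds_induced, Filter.mem_comap] at hs
  obtain ⟨t, ht, hts⟩ := hs
  rw [nhds_pi, Filter.mem_pi] at ht
  obtain ⟨I, hIfin, t', ht', hsub⟩ := ht
  obtain ⟨N, hN⟩ := hIfin.bddAbove
  refine ⟨N, fun g hg => ?_⟩
  apply hts
  apply hsub
  intro i hi
  show coeff i g ∈ t' i
  rw [hg i (hN hi)]
  have := ht' i
  rwa [nhds_discrete, Filter.mem_pure] at this

lemma huTop_nhds_one {K : Type} [CommRing K] (s : Set ↥(HU K 1))
    (hs : s ∈ @nhds _ (huTop K 1) 1) :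
    ∃ N : ℕ, ∀ u : ↥(HU K 1), (u : (PowerSeries K)ˣ) ∈ HU K (N + 1) → u ∈ s := by
  have hcomp : huTop K 1 = TopologicalSpace.induced
      (fun u : ↥(HU K 1) => ((u : (PowerSeries K)ˣ) : PowerSeries K)) (psTop K) := by
    rw [show huTop K 1 = TopologicalSpace.induced (Subtype.val) (unitsTop K) from rfl,
        show unitsTop K = TopologicalSpace.induced (Units.val) (psTop K) from rfl,
        induced_compose]
    rfl
  rw [hcomp, @nhds_induced _ _ (psTop K) (fun u : ↥(HU K 1) => ((u : (PowerSeries K)ˣ) : PowerSeries K)) 1, Filter.mem_comap] at hs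
  obtain ⟨t, ht, hts⟩ := hs
  obtain ⟨N, hN⟩ := psTop_nhds _ _ ht
  refine ⟨N, fun u hu => ?_⟩
  apply hts
  apply hN
  intro n hn
  rw [mem_HU_iff, X_pow_dvd_iff] at hu
  have := hu n (Nat.lt_succ_of_le hn)
  rw [map_sub, sub_eq_zero] at this
  simpa using this

end Aux

/-- For `Q = p^d`, `e ≥ 1`, and a continuous homomorphism
`φ : U^1 → ℤ/p^eℤ` from the first higher unit group of `𝔽_Q((t))`, the jumps satisfy
`jump_i(φ) ≥ p·jump_{i+1}(φ)` for all `i ≥ 0`. -/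
theorem stmt17
    (p d Q e : ℕ) (hp : p.Prime) (hd : 1 ≤ d) (hQ : Q = p ^ d) (he : 1 ≤ e)
    (K : Type) [Field K] [Fintype K] (hK : Fintype.card K = Q)
    (φ : ↥(HU K 1) →* Multiplicative (ZMod (p ^ e))) (hφ : IsContHom φ) :
    ∀ i : ℕ, p * jumpAt φ (i + 1) ≤ jumpAt φ i := by
  intro i
  haveI hpf : Fact p.Prime := ⟨hp⟩
  -- characteristic of K is p
  haveI hchK : CharP K p := by
    obtain ⟨q, hq⟩ := CharP.exists K
    haveI := hq
    haveI : Fact q.Prime := ⟨CharP.char_is_prime K q⟩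
    obtain ⟨n, hn⟩ := FiniteField.card K q
    have hqp : q = p := by
      have hdvd : q ∣ p ^ d := by
        rw [← hQ, ← hK, hn.2]
        exact dvd_pow_self q n.2.ne'
      exact (Nat.prime_dvd_prime_iff_eq (CharP.char_is_prime K q) hp).mp
        ((CharP.char_is_prime K q).dvd_of_dvd_pow hdvd)
    rwa [hqp] at hq
  haveI hchPS : CharP (PowerSeries K) p := by
    have hCinj : Function.Injective (PowerSeries.C : K →+* PowerSeries K) := fun a b h => by
      simpa using congrArg (PowerSeries.constantCoeff : PowerSeries K →+* K) h
    exact charP_of_injective_ringHom hCinj p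
  -- continuity gives the jump sets are nonempty
  obtain ⟨N, hN⟩ : ∃ N : ℕ, ∀ u : ↥(HU K 1),
      (u : (PowerSeries K)ˣ) ∈ HU K (N + 1) → φ u = 1 := by
    letI := huTop K 1
    letI : TopologicalSpace (Multiplicative (ZMod (p ^ e))) := ⊥
    haveI : DiscreteTopology (Multiplicative (ZMod (p ^ e))) := ⟨rfl⟩
    have hcont : Continuous ⇑φ := hφ
    have h1 : ⇑φ ⁻¹' {1} ∈ @nhds _ (huTop K 1) 1 := by
      have := hcont.continuousAt (x := 1)
      have hmem : {(1 : Multiplicative (ZMod (p ^ e)))} ∈ nhds (φ 1) := by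
        rw [map_one, nhds_discrete, Filter.mem_pure]; rfl
      exact this hmem
    obtain ⟨N, hN⟩ := huTop_nhds_one _ h1
    exact ⟨N, fun u hu => hN u hu⟩
  have hSne : ∀ j : ℕ, {k : ℕ | ∀ u : ↥(HU K 1),
      (u : (PowerSeries K)ˣ) ∈ HU K (k + 1) → (φ u) ^ (p ^ j) = 1}.Nonempty :=
    fun j => ⟨N, fun u hu => by rw [hN u hu, one_pow]⟩
  have hk : jumpAt φ i ∈ {k : ℕ | ∀ u : ↥(HU K 1),
      (u : (PowerSeries K)ˣ) ∈ HU K (k + 1) → (φ u) ^ (p ^ i) = 1} := Nat.sInf_mem (hSne i)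
  set k := jumpAt φ i with hkdef
  -- k / p is in the (i+1)-th jump set
  have hmem : (k / p) ∈ {k : ℕ | ∀ u : ↥(HU K 1),
      (u : (PowerSeries K)ˣ) ∈ HU K (k + 1) → (φ u) ^ (p ^ (i + 1)) = 1} := by
    intro u hu
    have hup : ((u ^ p : ↥(HU K 1)) : (PowerSeries K)ˣ) ∈ HU K (k + 1) := by
      rw [mem_HU_iff] at hu ⊢
      push_cast
      have h1 : ((u : (PowerSeries K)ˣ) : PowerSeries K) ^ p - 1
          = (((u : (PowerSeries K)ˣ) : PowerSeries K) - 1) ^ p := by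
        rw [sub_pow_char, one_pow]
      rw [h1]
      have h2 : (PowerSeries.X : PowerSeries K) ^ (k + 1) ∣
          (PowerSeries.X : PowerSeries K) ^ ((k / p + 1) * p) := by
        apply pow_dvd_pow
        nlinarith [Nat.div_add_mod k p, Nat.mod_lt k hp.pos]
      exact h2.trans (by rw [pow_mul]; exact pow_dvd_pow_of_dvd hu p)
    have h3 := hk (u ^ p) hup
    rw [map_pow] at h3
    calc (φ u) ^ (p ^ (i + 1)) = ((φ u) ^ p) ^ (p ^ i) := by
          rw [← pow_mul, pow_succ, mul_comm]
      _ = 1 := h3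
  have h4 : jumpAt φ (i + 1) ≤ k / p := Nat.sInf_le hmem
  calc p * jumpAt φ (i + 1) ≤ p * (k / p) := Nat.mul_le_mul_left _ h4
    _ ≤ k := by rw [mul_comm]; exact Nat.div_mul_le_self k p
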